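/- Let r ≥ 2 and t ≥ 2 be integers. In ℝ¹, let B_1, …, B_r be finite indexed families (repetitions allowed) of closed segments with |B_i| = n_i for i = 1, …, r. If the intersection hypergraph H of (B_1, …, B_r) is K_{t,…,t}^{(r)}-free, then the number of hyperedges of H is strictly less than 4^{r-1} · g_t(n_1, …, n_r). -/

import Mathlib

open Set

/-- The axis-parallel box in `ℝ^d` with corner functions `lo` and `hi`. -/
def boxSet {d : ℕ} (lo hi : Fin d → ℝ) : Set (Fin d → ℝ) :=
  {x | ∀ i, x i ∈ Set.Icc (lo i) (hi i)}

/-- `S` is an axis-parallel box in `ℝ^d` with direction set `F`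
(degenerate coordinates allowed). -/
def IsBoxDir {d : ℕ} (S : Set (Fin d → ℝ)) (F : Set (Fin d)) : Prop :=
  ∃ lo hi : Fin d → ℝ, (∀ i, lo i ≤ hi i) ∧ S = boxSet lo hi ∧ F = {i | lo i < hi i}

/-- `S` is an axis-parallel box in `ℝ^d` (with some direction set). -/
def IsBox {d : ℕ} (S : Set (Fin d → ℝ)) : Prop :=
  ∃ lo hi : Fin d → ℝ, (∀ i, lo i ≤ hi i) ∧ S = boxSet lo hi

/-- The number of hyperedges of the `r`-partite `r`-uniform intersection hypergraph of
the indexed families `B j : Fin (n j) → Set α`. -/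
noncomputable def hyperedgeCount {α : Type} {r : ℕ} (n : Fin r → ℕ)
    (B : ∀ j : Fin r, Fin (n j) → Set α) : ℕ :=
  Nat.card {f : ∀ j : Fin r, Fin (n j) // (⋂ j, B j (f j)).Nonempty}

/-- The intersection hypergraph of the families `B j` is `K_{t,…,t}`-free:
there are no `t`-element subfamilies `S j ⊆ B j` all of whose transversal tuples
have a common point. -/
def KFree {α : Type} {r : ℕ} (t : ℕ) (n : Fin r → ℕ)
    (B : ∀ j : Fin r, Fin (n j) → Set α) : Prop :=
  ¬ ∃ S : ∀ j : Fin r, Finset (Fin (n j)),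
      (∀ j, (S j).card = t) ∧
      ∀ f : ∀ j : Fin r, Fin (n j), (∀ j, f j ∈ S j) → (⋂ j, B j (f j)).Nonempty

/-- `g_t(n_1, …, n_r) = t · n_1 ⋯ n_r · (1/n_1 + ⋯ + 1/n_r)`. -/
noncomputable def gZ {r : ℕ} (t : ℕ) (n : Fin r → ℕ) : ℝ :=
  (t : ℝ) * (∏ j, (n j : ℝ)) * (∑ j, 1 / (n j : ℝ))

/-- `F` is a 2-coherent direction-vector: for some `k`, the common directions of all
families other than `k` number at least two. -/
def TwoCoherent {d r : ℕ} (F : Fin r → Set (Fin d)) : Prop :=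
  ∃ k : Fin r, 2 ≤ Set.ncard {i : Fin d | ∀ j : Fin r, j ≠ k → i ∈ F j}

/-- `S` is a closed segment (interval) in `ℝ¹`, degenerate allowed. -/
def IsSeg (S : Set ℝ) : Prop := ∃ a b : ℝ, a ≤ b ∧ S = Set.Icc a b


section Aux
open Finset

noncomputable def edgeC {r : ℕ} (n : Fin r → ℕ) (B : ∀ j : Fin r, Fin (n j) → Set ℝ)
    (A : ∀ j : Fin r, Finset (Fin (n j))) : Finset (∀ j : Fin r, Fin (n j)) :=
  @Finset.filter _ (fun f => (⋂ j, B j (f j)).Nonempty) (Classical.decPred _)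
    (Fintype.piFinset A)

lemma mem_edgeC {r : ℕ} {n : Fin r → ℕ} {B : ∀ j : Fin r, Fin (n j) → Set ℝ}
    {A : ∀ j : Fin r, Finset (Fin (n j))} {f : ∀ j : Fin r, Fin (n j)} :
    f ∈ edgeC n B A ↔ (∀ j, f j ∈ A j) ∧ (⋂ j, B j (f j)).Nonempty := by
  classical
  rw [edgeC]
  rw [Finset.mem_filter, Fintype.mem_piFinset]

lemma card_le_piC {r : ℕ} {n : Fin r → ℕ} {s : Finset (∀ j : Fin r, Fin (n j))}
    {C : ∀ j : Fin r, Finset (Fin (n j))} (h : ∀ f ∈ s, ∀ i, f i ∈ C i) :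
    s.card ≤ ∏ i, (C i).card := by
  classical
  calc s.card ≤ (Fintype.piFinset C).card :=
        Finset.card_le_card (fun f hf => Fintype.mem_piFinset.mpr (h f hf))
    _ = ∏ i, (C i).card := Fintype.card_piFinset C

lemma topt {α : Type*} [DecidableEq α] (g : α → ℝ) :
    ∀ (t : ℕ) (s : Finset α), t ≤ s.card →
    ∃ u ⊆ s, u.card = t ∧ ∀ x ∈ s, x ∉ u → ∀ y ∈ u, g x ≤ g y := by
  intro t
  induction t with
  | zero => exact fun s _ => ⟨∅, empty_subset _, rfl, by simp⟩
  | succ t ih =>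
    intro s hs
    have hsne : s.Nonempty := card_pos.mp (by omega)
    obtain ⟨a, ha, hamax⟩ := s.exists_max_image g hsne
    obtain ⟨u, hus, hucard, hutop⟩ := ih (s.erase a) (by rw [card_erase_of_mem ha]; omega)
    refine ⟨insert a u, insert_subset ha (hus.trans (erase_subset _ _)), ?_, ?_⟩
    · rw [card_insert_of_notMem (fun h => (mem_erase.mp (hus h)).1 rfl), hucard]
    · intro x hx hxu y hy
      rcases mem_insert.mp hy with rfl | hyu
      · exact hamax x hx
      · exact hutop x (mem_erase.mpr ⟨fun h => hxu (h ▸ mem_insert_self a u), hx⟩)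
          (fun h => hxu (mem_insert_of_mem h)) y hyu

lemma prodC {r : ℕ} {n : Fin r → ℕ} (A : ∀ i : Fin r, Finset (Fin (n i)))
    (j i' : Fin r) (hne : i' ≠ j) (u : Finset (Fin (n j))) (v : Finset (Fin (n i'))) :
    ∏ i, ((Function.update (Function.update A j u) i' v) i).card
      = v.card * (u.card * ∏ i ∈ (Finset.univ.erase j).erase i', (A i).card) := by
  classical
  set C := Function.update (Function.update A j u) i' v with hC
  have hjm : j ∈ Finset.univ.erase i' := mem_erase.mpr ⟨hne.symm, mem_univ _⟩
  rw [← Finset.mul_prod_erase Finset.univ (fun i => (C i).card) (mem_univ i'),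
    ← Finset.mul_prod_erase _ (fun i => (C i).card) hjm]
  have h1 : C i' = v := by simp [hC]
  have h2 : C j = u := by
    simp only [hC, Function.update]
    rw [dif_neg hne.symm]
    simp
  rw [Finset.erase_right_comm]
  congr 1
  · rw [h1]
  congr 1
  · rw [h2]
  apply Finset.prod_congr rfl
  intro i hi
  have h3 : i ≠ i' := (mem_erase.mp hi).1
  have h4 : i ≠ j := (mem_erase.mp (mem_of_mem_erase hi)).1
  simp [hC, Function.update, dif_neg h3, dif_neg h4]

lemma arith {r : ℕ} (f f' : Fin r → ℕ) (j i' : Fin r) (hne : i' ≠ j) (m : ℕ)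
    (hj : f' j + 1 = f j) (hi' : f' i' + m = f i')
    (hrest : ∀ i, i ≠ j → i ≠ i' → f' i = f i) :
    (∑ l, ∏ i ∈ Finset.univ.erase l, f' i) +
      (m + 1) * ∏ i ∈ (Finset.univ.erase j).erase i', f i ≤
    ∑ l, ∏ i ∈ Finset.univ.erase l, f i := by
  classical
  set s := (Finset.univ.erase j).erase i' with hs
  have hmem : ∀ i ∈ s, i ≠ j ∧ i ≠ i' := fun i hi =>
    ⟨(mem_erase.mp (mem_of_mem_erase hi)).1, (mem_erase.mp hi).1⟩
  have hPP : ∏ i ∈ s, f' i = ∏ i ∈ s, f i :=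
    Finset.prod_congr rfl (fun i hi => hrest i (hmem i hi).1 (hmem i hi).2)
  have hle : ∀ i, f' i ≤ f i := by
    intro i
    by_cases h1 : i = j
    · subst h1; omega
    by_cases h2 : i = i'
    · subst h2; omega
    · rw [hrest i h1 h2]
  have hi'mem : i' ∈ Finset.univ.erase j := mem_erase.mpr ⟨hne, mem_univ _⟩
  have hjmem : j ∈ Finset.univ.erase i' := mem_erase.mpr ⟨hne.symm, mem_univ _⟩
  have split : ∀ g : Fin r → ℕ, ∑ l, ∏ i ∈ Finset.univ.erase l, g i
      = (∏ i ∈ Finset.univ.erase j, g i) + ((∏ i ∈ Finset.univ.erase i', g i)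
        + ∑ l ∈ s, ∏ i ∈ Finset.univ.erase l, g i) := by
    intro g
    rw [← Finset.add_sum_erase _ _ (mem_univ j), ← Finset.add_sum_erase _ _ hi'mem]
  have e1 : ∏ i ∈ Finset.univ.erase j, f' i = f' i' * ∏ i ∈ s, f' i :=
    (Finset.mul_prod_erase _ _ hi'mem).symm
  have e2 : ∏ i ∈ Finset.univ.erase j, f i = f i' * ∏ i ∈ s, f i :=
    (Finset.mul_prod_erase _ _ hi'mem).symm
  have ecomm : (Finset.univ.erase i').erase j = s := by rw [hs, Finset.erase_right_comm]
  have e3 : ∏ i ∈ Finset.univ.erase i', f' i = f' j * ∏ i ∈ s, f' i := by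
    rw [← ecomm]; exact (Finset.mul_prod_erase _ _ hjmem).symm
  have e4 : ∏ i ∈ Finset.univ.erase i', f i = f j * ∏ i ∈ s, f i := by
    rw [← ecomm]; exact (Finset.mul_prod_erase _ _ hjmem).symm
  have hsum : ∑ l ∈ s, ∏ i ∈ Finset.univ.erase l, f' i
      ≤ ∑ l ∈ s, ∏ i ∈ Finset.univ.erase l, f i :=
    Finset.sum_le_sum (fun l _ => Finset.prod_le_prod' (fun i _ => hle i))
  rw [split f', split f, e1, e2, e3, e4, hPP]
  have key : f' i' * ∏ i ∈ s, f i + f' j * ∏ i ∈ s, f i + (m + 1) * ∏ i ∈ s, f i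
      = f i' * ∏ i ∈ s, f i + f j * ∏ i ∈ s, f i := by
    rw [← hj, ← hi']; ring
  omega

lemma aux {r : ℕ} (t : ℕ) (ht : 2 ≤ t) (hr : 2 ≤ r) (n : Fin r → ℕ)
    (B : ∀ i : Fin r, Fin (n i) → Set ℝ)
    (lo hi : ∀ i : Fin r, Fin (n i) → ℝ)
    (hlh : ∀ i k, lo i k ≤ hi i k)
    (hBic : ∀ i k, B i k = Set.Icc (lo i k) (hi i k))
    (hfree : KFree t n B) (N : ℕ) :
    ∀ A : ∀ j : Fin r, Finset (Fin (n j)), (∑ j, (A j).card) ≤ N →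
      (edgeC n B A).card ≤ (t - 1) * ∑ l, ∏ i ∈ Finset.univ.erase l, (A i).card := by
  classical
  induction N with
  | zero =>
    intro A hA
    have hempty : (A ⟨0, by omega⟩).card = 0 := by
      have := Finset.single_le_sum (f := fun j => (A j).card)
        (fun _ _ => Nat.zero_le _) (mem_univ (⟨0, by omega⟩ : Fin r))
      omega
    have : edgeC n B A = ∅ := by
      apply Finset.eq_empty_of_forall_notMem
      intro f hf
      have := (mem_edgeC.mp hf).1 ⟨0, by omega⟩
      rw [Finset.card_eq_zero.mp hempty] at this
      exact absurd this (Finset.notMem_empty _)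
    rw [this]; simp
  | succ N ih =>
    intro A hA
    by_cases hne : ∀ j, (A j).Nonempty
    swap
    · push_neg at hne
      obtain ⟨j0, hj0⟩ := hne
      have : edgeC n B A = ∅ := by
        apply Finset.eq_empty_of_forall_notMem
        intro f hf
        have := (mem_edgeC.mp hf).1 j0
        rw [hj0] at this
        exact absurd this (Finset.notMem_empty _)
      rw [this]; simp
    -- choose interval of minimal right endpoint
    have hSne : (Finset.univ.sigma A).Nonempty := by
      obtain ⟨x, hx⟩ := hne ⟨0, by omega⟩
      exact ⟨⟨_, x⟩, Finset.mem_sigma.mpr ⟨mem_univ _, hx⟩⟩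
    obtain ⟨p, hpS, hpmin⟩ := Finset.exists_min_image (Finset.univ.sigma A) (fun p => hi p.1 p.2) hSne
    obtain ⟨j, k⟩ := p
    simp only at hpmin
    have hk : k ∈ A j := (Finset.mem_sigma.mp hpS).2
    have hmin : ∀ i, ∀ x ∈ A i, hi j k ≤ hi i x := fun i x hx =>
      hpmin ⟨i, x⟩ (Finset.mem_sigma.mpr ⟨Finset.mem_univ _, hx⟩)
    have factc : ∀ f ∈ edgeC n B A, f j = k → ∀ i, hi j k ∈ B i (f i) := by
      intro f hf hfj i
      obtain ⟨hfA, x, hx⟩ := mem_edgeC.mp hf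
      simp only [Set.mem_iInter] at hx
      have hxj := hx j
      rw [hfj, hBic] at hxj
      have hxi := hx i
      rw [hBic] at hxi ⊢
      exact ⟨le_trans hxi.1 hxj.2, hmin i (f i) (hfA i)⟩
    set F : ∀ i : Fin r, Finset (Fin (n i)) :=
      (fun i => (A i).filter (fun x => hi j k ∈ B i x)) with hF
    have hFsub : ∀ i, F i ⊆ A i := fun i => Finset.filter_subset _ _
    -- endgame
    have endgame : ∀ (i' : Fin r), i' ≠ j → ∀ (M : Finset (Fin (n i'))), M ⊆ A i' →
        (edgeC n B A).card ≤
          (edgeC n B (Function.update (Function.update A j ((A j).erase k)) i'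
            ((A i') \ M))).card
          + (t - 1) * ((M.card + 1) * ∏ i ∈ (Finset.univ.erase j).erase i', (A i).card)
        → (edgeC n B A).card ≤ (t - 1) * ∑ l, ∏ i ∈ Finset.univ.erase l, (A i).card := by
      intro i' hi'j M hMA hrem
      set A' := Function.update (Function.update A j ((A j).erase k)) i' ((A i') \ M)
        with hA'
      have hA'j : A' j = (A j).erase k := by
        rw [hA', Function.update_of_ne hi'j.symm, Function.update_self]
      have hA'i : A' i' = (A i') \ M := by rw [hA', Function.update_self]
      have hA'o : ∀ i, i ≠ j → i ≠ i' → A' i = A i := by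
        intro i h1 h2
        rw [hA', Function.update_of_ne h2, Function.update_of_ne h1]
      have hc1 : (A' j).card + 1 = (A j).card := by
        rw [hA'j, Finset.card_erase_of_mem hk]
        have : 1 ≤ (A j).card := Finset.card_pos.mpr ⟨k, hk⟩
        omega
      have hc2 : (A' i').card + M.card = (A i').card := by
        rw [hA'i, Finset.card_sdiff_of_subset hMA]
        have := Finset.card_le_card hMA
        omega
      have hc3 : ∀ i, i ≠ j → i ≠ i' → (A' i).card = (A i).card := by
        intro i h1 h2; rw [hA'o i h1 h2]
      have hsum : ∑ l, (A' l).card ≤ N := by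
        have hs1 : ∑ l ∈ Finset.univ.erase j, (A' l).card
            ≤ ∑ l ∈ Finset.univ.erase j, (A l).card := by
          apply Finset.sum_le_sum
          intro i hi2
          by_cases h2 : i = i'
          · subst h2; omega
          · rw [hc3 i (mem_erase.mp hi2).1 h2]
        have e1 := Finset.add_sum_erase Finset.univ (fun l => (A' l).card) (mem_univ j)
        have e2 := Finset.add_sum_erase Finset.univ (fun l => (A l).card) (mem_univ j)
        omega
      have hIH := ih A' hsum
      have har := arith (fun i => (A i).card) (fun i => (A' i).card) j i' hi'j M.card
        hc1 hc2 hc3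
      calc (edgeC n B A).card
          ≤ (edgeC n B A').card
            + (t - 1) * ((M.card + 1) * ∏ i ∈ (Finset.univ.erase j).erase i', (A i).card) :=
            hrem
        _ ≤ (t - 1) * (∑ l, ∏ i ∈ Finset.univ.erase l, (A' i).card)
            + (t - 1) * ((M.card + 1) * ∏ i ∈ (Finset.univ.erase j).erase i', (A i).card) :=
            by omega
        _ = (t - 1) * ((∑ l, ∏ i ∈ Finset.univ.erase l, (A' i).card)
            + (M.card + 1) * ∏ i ∈ (Finset.univ.erase j).erase i', (A i).card) := by ring
        _ ≤ (t - 1) * ∑ l, ∏ i ∈ Finset.univ.erase l, (A i).card :=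
            Nat.mul_le_mul_left _ har
    by_cases hcase : ∃ i0, i0 ≠ j ∧ (F i0).card < t
    · -- Case A : some other family has few intervals through the point hi j k
      obtain ⟨i0, hi0j, hi0⟩ := hcase
      apply endgame i0 hi0j ∅ (Finset.empty_subset _)
      set A' := Function.update (Function.update A j ((A j).erase k)) i0 ((A i0) \ ∅)
        with hA'
      set X := (edgeC n B A).filter (fun f => f j = k) with hXdef
      have hsplit : edgeC n B A ⊆ edgeC n B A' ∪ X := by
        intro f hf
        obtain ⟨hfA, hfn⟩ := mem_edgeC.mp hf
        by_cases hfj : f j = k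
        · exact Finset.mem_union_right _ (Finset.mem_filter.mpr ⟨hf, hfj⟩)
        · refine Finset.mem_union_left _ (mem_edgeC.mpr ⟨?_, hfn⟩)
          intro i
          by_cases h1 : i = i0
          · subst h1
            rw [hA', Function.update_self, Finset.sdiff_empty]
            exact hfA i
          by_cases h2 : i = j
          · subst h2
            rw [hA', Function.update_of_ne (fun h => h1 h), Function.update_self]
            exact Finset.mem_erase.mpr ⟨hfj, hfA i⟩
          · rw [hA', Function.update_of_ne h1, Function.update_of_ne h2]
            exact hfA i
      have hXmem : ∀ f ∈ X, ∀ i,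
          f i ∈ (Function.update (Function.update A j {k}) i0 (F i0)) i := by
        intro f hf i
        obtain ⟨hfe, hfj⟩ := Finset.mem_filter.mp hf
        have hfA := (mem_edgeC.mp hfe).1
        by_cases h1 : i = i0
        · subst h1
          rw [Function.update_self]
          exact Finset.mem_filter.mpr ⟨hfA i, factc f hfe hfj i⟩
        by_cases h2 : i = j
        · subst h2
          rw [Function.update_of_ne (fun h => h1 h), Function.update_self, hfj]
          exact Finset.mem_singleton_self k
        · rw [Function.update_of_ne h1, Function.update_of_ne h2]
          exact hfA i
      have hXb : X.card ≤ (t - 1) * ∏ i ∈ (Finset.univ.erase j).erase i0, (A i).card := by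
        calc X.card ≤ ∏ i, ((Function.update (Function.update A j {k}) i0 (F i0)) i).card :=
              card_le_piC hXmem
          _ = (F i0).card * (({k} : Finset (Fin (n j))).card
              * ∏ i ∈ (Finset.univ.erase j).erase i0, (A i).card) :=
              prodC A j i0 hi0j {k} (F i0)
          _ ≤ (t - 1) * (1 * ∏ i ∈ (Finset.univ.erase j).erase i0, (A i).card) := by
              rw [Finset.card_singleton]
              exact Nat.mul_le_mul_right _ (by omega)
          _ = (t - 1) * ∏ i ∈ (Finset.univ.erase j).erase i0, (A i).card := by ring
      calc (edgeC n B A).card ≤ (edgeC n B A' ∪ X).card := Finset.card_le_card hsplit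
        _ ≤ (edgeC n B A').card + X.card := Finset.card_union_le _ _
        _ ≤ (edgeC n B A').card + (t - 1) * (((∅ : Finset (Fin (n i0))).card + 1)
            * ∏ i ∈ (Finset.univ.erase j).erase i0, (A i).card) := by
            rw [Finset.card_empty]
            have : (t - 1) * ((0 + 1) * ∏ i ∈ (Finset.univ.erase j).erase i0, (A i).card)
                = (t - 1) * ∏ i ∈ (Finset.univ.erase j).erase i0, (A i).card := by ring
            omega
    · -- Case B : all other families have at least t intervals through the point hi j k
      push_neg at hcase
      have hbig : ∀ i0, i0 ≠ j → t ≤ (F i0).card := fun i0 h => hcase i0 h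
      have hStop : ∀ i : Fin r, ∃ u : Finset (Fin (n i)), i ≠ j →
          u ⊆ F i ∧ u.card = t ∧ ∀ x ∈ F i, x ∉ u → ∀ y ∈ u, hi i x ≤ hi i y := by
        intro i
        by_cases hij : i = j
        · exact ⟨∅, fun h => absurd hij h⟩
        · obtain ⟨u, h1, h2, h3⟩ := topt (hi i) t (F i) (hbig i hij)
          exact ⟨u, fun _ => ⟨h1, h2, h3⟩⟩
      choose S hS using hStop
      have hymin : ∀ i : Fin r, ∃ y : Fin (n i), i ≠ j →
          y ∈ S i ∧ ∀ z ∈ S i, hi i y ≤ hi i z := by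
        intro i
        by_cases hij : i = j
        · exact ⟨(hne i).choose, fun h => absurd hij h⟩
        · have hSne2 : (S i).Nonempty := by
            rw [← Finset.card_pos, (hS i hij).2.1]; omega
          obtain ⟨yy, hy1, hy2⟩ := Finset.exists_min_image (S i) (hi i) hSne2
          exact ⟨yy, fun _ => ⟨hy1, hy2⟩⟩
      choose y hy using hymin
      have hejne : (Finset.univ.erase j).Nonempty := by
        rw [← Finset.card_pos, Finset.card_erase_of_mem (mem_univ j), Finset.card_univ,
          Fintype.card_fin]
        omega
      obtain ⟨i', hi'mem, hi'min⟩ := Finset.exists_min_image (Finset.univ.erase j)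
        (fun i => hi i (y i)) hejne
      have hi'j : i' ≠ j := (Finset.mem_erase.mp hi'mem).1
      have hcq : hi j k ≤ hi i' (y i') := by
        have h1 : y i' ∈ F i' := (hS i' hi'j).1 (hy i' hi'j).1
        have h2 := (Finset.mem_filter.mp h1).2
        rw [hBic] at h2
        exact h2.2
      set T := (A j).filter
        (fun x => (B j x ∩ Set.Icc (hi j k) (hi i' (y i'))).Nonempty) with hTdef
      have hTcard : T.card ≤ t - 1 := by
        by_contra hcon
        push_neg at hcon
        obtain ⟨Sj, hSjT, hSjcard⟩ := Finset.exists_subset_card_eq (by omega : t ≤ T.card)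
        apply hfree
        refine ⟨Function.update S j Sj, ?_, ?_⟩
        · intro l
          by_cases hlj : l = j
          · subst hlj; rw [Function.update_self]; exact hSjcard
          · rw [Function.update_of_ne hlj]; exact (hS l hlj).2.1
        · intro f hf
          have hfj := hf j
          rw [Function.update_self] at hfj
          have hfjT : f j ∈ T := hSjT hfj
          obtain ⟨hfjA, x, hx1, hx2⟩ := Finset.mem_filter.mp hfjT
          refine ⟨x, Set.mem_iInter.mpr ?_⟩
          intro i
          by_cases hij : i = j
          · subst hij; exact hx1
          · have hfi := hf i
            rw [Function.update_of_ne hij] at hfi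
            have hfiF : f i ∈ F i := (hS i hij).1 hfi
            rw [hBic]
            have hcB : hi j k ∈ B i (f i) := (Finset.mem_filter.mp hfiF).2
            rw [hBic] at hcB
            refine ⟨le_trans hcB.1 hx2.1, ?_⟩
            have h1 : hi i' (y i') ≤ hi i (y i) := hi'min i (mem_erase.mpr ⟨hij, mem_univ _⟩)
            have h2 : hi i (y i) ≤ hi i (f i) := (hy i hij).2 (f i) hfi
            exact le_trans hx2.2 (le_trans h1 h2)
      set M := (F i').filter (fun x => hi i' x ≤ hi i' (y i')) with hMdef
      have hMA : M ⊆ A i' := Finset.Subset.trans (Finset.filter_subset _ _) (hFsub i')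
      apply endgame i' hi'j M hMA
      set A' := Function.update (Function.update A j ((A j).erase k)) i' ((A i') \ M)
        with hA'
      set Y := (edgeC n B A).filter (fun f => f i' ∈ M) with hYdef
      set X := (edgeC n B A).filter (fun f => f j = k ∧ f i' ∉ M) with hXdef
      have hsplit : edgeC n B A ⊆ edgeC n B A' ∪ Y ∪ X := by
        intro f hf
        obtain ⟨hfA, hfn⟩ := mem_edgeC.mp hf
        by_cases hfM : f i' ∈ M
        · exact Finset.mem_union_left _
            (Finset.mem_union_right _ (Finset.mem_filter.mpr ⟨hf, hfM⟩))
        by_cases hfj : f j = k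
        · exact Finset.mem_union_right _ (Finset.mem_filter.mpr ⟨hf, hfj, hfM⟩)
        · refine Finset.mem_union_left _ (Finset.mem_union_left _
            (mem_edgeC.mpr ⟨?_, hfn⟩))
          intro i
          by_cases h1 : i = i'
          · subst h1
            rw [hA', Function.update_self]
            exact Finset.mem_sdiff.mpr ⟨hfA i, hfM⟩
          by_cases h2 : i = j
          · subst h2
            rw [hA', Function.update_of_ne (fun h => h1 h), Function.update_self]
            exact Finset.mem_erase.mpr ⟨hfj, hfA i⟩
          · rw [hA', Function.update_of_ne h1, Function.update_of_ne h2]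
            exact hfA i
      have hYmem : ∀ f ∈ Y, ∀ i,
          f i ∈ (Function.update (Function.update A j T) i' M) i := by
        intro f hf i
        obtain ⟨hfe, hfM⟩ := Finset.mem_filter.mp hf
        obtain ⟨hfA, x, hx⟩ := mem_edgeC.mp hfe
        simp only [Set.mem_iInter] at hx
        by_cases h1 : i = i'
        · subst h1; rw [Function.update_self]; exact hfM
        by_cases h2 : i = j
        · subst h2
          rw [Function.update_of_ne (fun h => h1 h), Function.update_self]
          refine Finset.mem_filter.mpr ⟨hfA i, ?_⟩
          -- find a point of B j (f j) in [hi j k, q]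
          obtain ⟨hfM1, hfM2⟩ := Finset.mem_filter.mp hfM
          have hxi' := hx i'
          rw [hBic] at hxi'
          have hxq : x ≤ hi i' (y i') := le_trans hxi'.2 hfM2
          have hxj := hx i
          rw [hBic] at hxj
          by_cases hxc : hi i k ≤ x
          · exact ⟨x, by rw [hBic]; exact hxj, hxc, hxq⟩
          · push_neg at hxc
            refine ⟨hi i k, by rw [hBic]; exact ⟨le_trans hxj.1 hxc.le,
              hmin i (f i) (hfA i)⟩, le_refl _, hcq⟩
        · rw [Function.update_of_ne h1, Function.update_of_ne h2]
          exact hfA i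
      have hXmem : ∀ f ∈ X, ∀ i,
          f i ∈ (Function.update (Function.update A j {k}) i' ((S i').erase (y i'))) i := by
        intro f hf i
        obtain ⟨hfe, hfj, hfM⟩ := Finset.mem_filter.mp hf
        have hfA := (mem_edgeC.mp hfe).1
        by_cases h1 : i = i'
        · subst h1
          rw [Function.update_self]
          have hfiF : f i ∈ F i := Finset.mem_filter.mpr ⟨hfA i, factc f hfe hfj i⟩
          have hq2 : ¬ (hi i (f i) ≤ hi i (y i)) := by
            intro hle
            exact hfM (Finset.mem_filter.mpr ⟨hfiF, hle⟩)
          push_neg at hq2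
          have hfS : f i ∈ S i := by
            by_contra hno
            exact absurd ((hS i hi'j).2.2 (f i) hfiF hno (y i) (hy i hi'j).1)
              (not_le.mpr hq2)
          refine Finset.mem_erase.mpr ⟨?_, hfS⟩
          intro heq
          rw [heq] at hq2
          exact lt_irrefl _ hq2
        by_cases h2 : i = j
        · subst h2
          rw [Function.update_of_ne (fun h => h1 h), Function.update_self, hfj]
          exact Finset.mem_singleton_self k
        · rw [Function.update_of_ne h1, Function.update_of_ne h2]
          exact hfA i
      have hYb : Y.card ≤ M.card * ((t - 1)
          * ∏ i ∈ (Finset.univ.erase j).erase i', (A i).card) := by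
        calc Y.card ≤ ∏ i, ((Function.update (Function.update A j T) i' M) i).card :=
              card_le_piC hYmem
          _ = M.card * (T.card * ∏ i ∈ (Finset.univ.erase j).erase i', (A i).card) :=
              prodC A j i' hi'j T M
          _ ≤ M.card * ((t - 1) * ∏ i ∈ (Finset.univ.erase j).erase i', (A i).card) :=
              Nat.mul_le_mul_left _ (Nat.mul_le_mul_right _ hTcard)
      have hXb : X.card ≤ (t - 1) * ∏ i ∈ (Finset.univ.erase j).erase i', (A i).card := by
        calc X.card
            ≤ ∏ i, ((Function.update (Function.update A j {k}) i' ((S i').erase (y i'))) i).card :=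
              card_le_piC hXmem
          _ = ((S i').erase (y i')).card * (({k} : Finset (Fin (n j))).card
              * ∏ i ∈ (Finset.univ.erase j).erase i', (A i).card) :=
              prodC A j i' hi'j {k} ((S i').erase (y i'))
          _ = (t - 1) * ∏ i ∈ (Finset.univ.erase j).erase i', (A i).card := by
              rw [Finset.card_erase_of_mem (hy i' hi'j).1, (hS i' hi'j).2.1,
                Finset.card_singleton]
              ring
      calc (edgeC n B A).card ≤ (edgeC n B A' ∪ Y ∪ X).card := Finset.card_le_card hsplit
        _ ≤ (edgeC n B A' ∪ Y).card + X.card := Finset.card_union_le _ _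
        _ ≤ (edgeC n B A').card + Y.card + X.card := by
            have := Finset.card_union_le (edgeC n B A') Y
            omega
        _ ≤ (edgeC n B A').card + (t - 1) * ((M.card + 1)
            * ∏ i ∈ (Finset.univ.erase j).erase i', (A i).card) := by
            have heq : M.card * ((t - 1) * ∏ i ∈ (Finset.univ.erase j).erase i', (A i).card)
                + (t - 1) * ∏ i ∈ (Finset.univ.erase j).erase i', (A i).card
                = (t - 1) * ((M.card + 1) * ∏ i ∈ (Finset.univ.erase j).erase i', (A i).card) := by
              ring
            omega



end Aux

section Main
open Finset

/-- `r` families of segments in `ℝ¹`; `K_{t,…,t}`-free implies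
`e(H) < 4^{r-1} · g_t(n_1,…,n_r)`. -/
theorem stmt14 (r t : ℕ) (hr : 2 ≤ r) (ht : 2 ≤ t)
    (n : Fin r → ℕ) (hn : ∀ i, 0 < n i)
    (B : ∀ i : Fin r, Fin (n i) → Set ℝ) (hB : ∀ i k, IsSeg (B i k))
    (hfree : KFree t n B) :
    (hyperedgeCount n B : ℝ) < 4 ^ (r - 1) * gZ t n := by
  classical
  have hB' : ∀ i k, ∃ a b : ℝ, a ≤ b ∧ B i k = Set.Icc a b := hB
  choose lo hi hlh hBic using hB'
  have hcount : hyperedgeCount n B = (edgeC n B (fun _ => Finset.univ)).card := by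
    rw [hyperedgeCount, Nat.card_eq_fintype_card, Fintype.card_subtype]
    congr 1
  have haux := aux t ht hr n B lo hi hlh hBic hfree
    (∑ j, (Finset.univ : Finset (Fin (n j))).card) (fun _ => Finset.univ) le_rfl
  simp only [Finset.card_univ, Fintype.card_fin] at haux
  rw [← hcount] at haux
  -- real arithmetic
  set Sn : ℝ := ∑ l, ∏ i ∈ Finset.univ.erase l, (n i : ℝ) with hSn
  have hSncast : ((∑ l, ∏ i ∈ Finset.univ.erase l, n i : ℕ) : ℝ) = Sn := by
    push_cast; rfl
  haveI : Nonempty (Fin r) := ⟨⟨0, by omega⟩⟩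
  have hSnpos : 0 < Sn := by
    apply Finset.sum_pos
    · intro l _
      apply Finset.prod_pos
      intro i _
      exact_mod_cast hn i
    · exact Finset.univ_nonempty
  have hgz : gZ t n = (t : ℝ) * Sn := by
    rw [gZ, hSn, mul_assoc, Finset.mul_sum, Finset.mul_sum, Finset.mul_sum]
    apply Finset.sum_congr rfl
    intro l _
    rw [← Finset.mul_prod_erase Finset.univ (fun i => (n i : ℝ)) (Finset.mem_univ l)]
    have hnl : ((n l : ℝ)) ≠ 0 := by
      exact_mod_cast (hn l).ne'
    field_simp
  have h1 : (hyperedgeCount n B : ℝ) ≤ ((t - 1 : ℕ) : ℝ) * Sn := by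
    calc (hyperedgeCount n B : ℝ)
        ≤ (((t - 1) * ∑ l, ∏ i ∈ Finset.univ.erase l, n i : ℕ) : ℝ) := by
          exact_mod_cast haux
      _ = ((t - 1 : ℕ) : ℝ) * Sn := by rw [Nat.cast_mul, hSncast]
  have h2 : ((t - 1 : ℕ) : ℝ) < (t : ℝ) := by
    have : (t - 1 : ℕ) < t := by omega
    exact_mod_cast this
  have h3 : (1 : ℝ) ≤ 4 ^ (r - 1) := by
    have h4 : ((4 ^ (r - 1) : ℕ) : ℝ) = (4 : ℝ) ^ (r - 1) := by push_cast; ring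
    rw [← h4]
    exact_mod_cast Nat.one_le_pow _ _ (by norm_num)
  calc (hyperedgeCount n B : ℝ) ≤ ((t - 1 : ℕ) : ℝ) * Sn := h1
    _ < (t : ℝ) * Sn := by exact mul_lt_mul_of_pos_right h2 hSnpos
    _ = gZ t n := hgz.symm
    _ ≤ 4 ^ (r - 1) * gZ t n := by
        nlinarith [mul_pos (by positivity : (0:ℝ) < (t:ℝ)) hSnpos, hgz]

end Main
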